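/- Let μ > 0, let α be a real with 0 < α < 2/μ, let T ≥ 1 be an integer with α·μ·T ≥ 2, and let c ≥ 0. Let Δ_0, Δ_1, …, Δ_T and D_0, …, D_{T−1} be nonnegative reals satisfying Δ_{t+1} ≤ (1 − αμ/2)·Δ_t − α·D_t + c for all 0 ≤ t ≤ T−1. Define the weights ξ_t := (1 − αμ/2)^{−(t+1)} and X := Σ_{t=0}^{T−1} ξ_t. Then the weighted average satisfies (1/X)·Σ_{t=0}^{T−1} ξ_t·D_t ≤ μ·e^{−αμT/2}·Δ_0 + c/α. -/

import Mathlib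

open Finset

/-- Final convergence-rate step of Theorem 1 (pFedBreD's global bound): the weighted
average of the suboptimality gaps satisfies
`(1/X)Σ ξ_t D_t ≤ μ e^{−αμT/2} Δ₀ + c/α`, where `ξ_t = (1 − αμ/2)^{−(t+1)}`. -/
theorem weighted_average_convergence_bound
    (μ α : ℝ) (hμ : 0 < μ) (hα : 0 < α) (hα2 : α < 2 / μ)
    (T : ℕ) (hT : 1 ≤ T) (hstep : 2 ≤ α * μ * T)
    (c : ℝ) (hc : 0 ≤ c)
    (Δ : ℕ → ℝ) (hΔ : ∀ t, t ≤ T → 0 ≤ Δ t)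
    (D : ℕ → ℝ) (hD : ∀ t, t ≤ T - 1 → 0 ≤ D t)
    (hrec : ∀ t, t ≤ T - 1 → Δ (t + 1) ≤ (1 - α * μ / 2) * Δ t - α * D t + c) :
    (1 / ∑ t ∈ range T, (1 - α * μ / 2) ^ (-(t : ℤ) - 1)) *
        ∑ t ∈ range T, (1 - α * μ / 2) ^ (-(t : ℤ) - 1) * D t
      ≤ μ * Real.exp (-(α * μ * T) / 2) * Δ 0 + c / α := by
  set r : ℝ := 1 - α * μ / 2 with hrdef
  have hαμ : α * μ < 2 := (lt_div_iff₀ hμ).mp hα2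
  have hr0 : 0 < r := by simp only [hrdef]; linarith
  have hr1 : r < 1 := by simp only [hrdef]; nlinarith
  have hξ : ∀ t : ℕ, r ^ (-(t : ℤ) - 1) = (r ^ (t + 1))⁻¹ := by
    intro t
    rw [show -(t : ℤ) - 1 = -(((t + 1 : ℕ) : ℤ)) by push_cast; ring, zpow_neg, zpow_natCast]
  set X : ℝ := ∑ t ∈ range T, (r ^ (t + 1))⁻¹ with hXdef
  have hXeq : ∑ t ∈ range T, r ^ (-(t : ℤ) - 1) = X := by
    apply Finset.sum_congr rfl; intro t _; exact hξ t
  have hSeq : ∑ t ∈ range T, r ^ (-(t : ℤ) - 1) * D t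
      = ∑ t ∈ range T, (r ^ (t + 1))⁻¹ * D t := by
    apply Finset.sum_congr rfl; intro t _; rw [hξ t]
  rw [hXeq, hSeq]
  set S : ℝ := ∑ t ∈ range T, (r ^ (t + 1))⁻¹ * D t with hSdef
  clear_value r X S
  -- telescoping inequality
  have key : ∀ n, n ≤ T →
      (r ^ n)⁻¹ * Δ n + α * ∑ t ∈ range n, (r ^ (t + 1))⁻¹ * D t
        ≤ Δ 0 + c * ∑ t ∈ range n, (r ^ (t + 1))⁻¹ := by
    intro n hn
    induction n with
    | zero => simp
    | succ k ih =>
      have ihk := ih (by omega)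
      have hk : k ≤ T - 1 := by omega
      have hrec' := hrec k hk
      have hpos : 0 < (r ^ (k + 1))⁻¹ := by positivity
      have hid : (r ^ (k + 1))⁻¹ * r = (r ^ k)⁻¹ := by
        rw [pow_succ, mul_inv, mul_assoc, inv_mul_cancel₀ hr0.ne', mul_one]
      have h1 : (r ^ (k + 1))⁻¹ * Δ (k + 1)
          ≤ (r ^ k)⁻¹ * Δ k - α * ((r ^ (k + 1))⁻¹ * D k) + c * (r ^ (k + 1))⁻¹ := by
        have h := mul_le_mul_of_nonneg_left hrec' hpos.le
        calc (r ^ (k + 1))⁻¹ * Δ (k + 1)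
            ≤ (r ^ (k + 1))⁻¹ * (r * Δ k - α * D k + c) := h
          _ = ((r ^ (k + 1))⁻¹ * r) * Δ k - α * ((r ^ (k + 1))⁻¹ * D k)
              + c * (r ^ (k + 1))⁻¹ := by ring
          _ = (r ^ k)⁻¹ * Δ k - α * ((r ^ (k + 1))⁻¹ * D k)
              + c * (r ^ (k + 1))⁻¹ := by rw [hid]
      rw [Finset.sum_range_succ, Finset.sum_range_succ]
      linarith
  have hmain : α * S ≤ Δ 0 + c * X := by
    have h := key T le_rfl
    have hΔT : 0 ≤ (r ^ T)⁻¹ * Δ T := by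
      have := hΔ T le_rfl; positivity
    rw [hSdef, hXdef]
    linarith
  -- geometric sum identity
  have hgeo : ∀ n : ℕ, (1 - r) * ∑ t ∈ range n, (r ^ (t + 1))⁻¹ = (r ^ n)⁻¹ - 1 := by
    intro n
    induction n with
    | zero => simp
    | succ k ih =>
      rw [Finset.sum_range_succ, mul_add, ih]
      have hid : (r ^ (k + 1))⁻¹ * r = (r ^ k)⁻¹ := by
        rw [pow_succ, mul_inv, mul_assoc, inv_mul_cancel₀ hr0.ne', mul_one]
      nlinarith [hid]
  have hgeoT : (1 - r) * X = (r ^ T)⁻¹ - 1 := by rw [hXdef]; exact hgeo T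
  have hX : 0 < X := by
    rw [hXdef]
    apply Finset.sum_pos (fun i _ => by positivity)
    exact Finset.nonempty_range_iff.mpr (by omega)
  set E : ℝ := Real.exp (-(α * μ * T) / 2) with hEdef
  have hE0 : 0 < E := Real.exp_pos _
  -- r^T ≤ E
  have hrT : r ^ T ≤ E := by
    have h1 : r ≤ Real.exp (-(α * μ / 2)) := by
      have := Real.add_one_le_exp (-(α * μ / 2)); simp only [hrdef]; linarith
    calc r ^ T ≤ (Real.exp (-(α * μ / 2))) ^ T := pow_le_pow_left₀ hr0.le h1 T
      _ = Real.exp ((T : ℝ) * (-(α * μ / 2))) := by rw [← Real.exp_nat_mul]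
      _ = E := by rw [hEdef]; ring_nf
  have hEhalf : E ≤ 1 / 2 := by
    have h1 : E ≤ Real.exp (-1) := by
      apply Real.exp_le_exp.mpr; nlinarith
    have h2 : Real.exp (-1) ≤ 1 / 2 := by
      have hex : (2 : ℝ) ≤ Real.exp 1 := by
        have := Real.add_one_le_exp (1 : ℝ); linarith
      have hmul : Real.exp (-1) * Real.exp 1 = 1 := by
        rw [← Real.exp_add]; norm_num
      nlinarith [Real.exp_pos (-1)]
    linarith
  have hrTpos : 0 < r ^ T := by positivity
  have hrThalf : r ^ T ≤ 1 / 2 := hrT.trans hEhalf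
  -- 1/(α X) ≤ μ E
  have hkey2 : 1 / (α * X) ≤ μ * E := by
    rw [div_le_iff₀ (by positivity)]
    -- μ * E * (α * X) = 2 * E * ((r^T)⁻¹ - 1) / 1 ... use hgeoT : (αμ/2) X = p⁻¹ - 1
    have h1 : α * μ / 2 * X = (r ^ T)⁻¹ - 1 := by
      have : (1 - r) = α * μ / 2 := by simp only [hrdef]; ring
      rw [← this]; exact hgeoT
    have hp : (r ^ T)⁻¹ ≥ 2 := by
      rw [ge_iff_le, le_inv_comm₀ (by norm_num) hrTpos]; linarith
    have h2 : μ * E * (α * X) = 2 * E * ((r ^ T)⁻¹ - 1) := by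
      rw [← h1]; ring
    rw [h2]
    have h3 : r ^ T * ((r ^ T)⁻¹ - 1) = 1 - r ^ T := by
      field_simp
    nlinarith [mul_le_mul_of_nonneg_right hrT (by linarith : (0:ℝ) ≤ (r ^ T)⁻¹ - 1)]
  -- finish
  have hS0 : 0 ≤ S := by
    rw [hSdef]
    apply Finset.sum_nonneg
    intro t ht
    have : t ≤ T - 1 := by have := Finset.mem_range.mp ht; omega
    have := hD t this; positivity
  have hΔ0 : 0 ≤ Δ 0 := hΔ 0 (by omega)
  have step1 : (1 / X) * S ≤ Δ 0 / (α * X) + c / α := by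
    have h2 : (α * S) / (α * X) ≤ (Δ 0 + c * X) / (α * X) := by gcongr
    have e1 : (α * S) / (α * X) = (1 / X) * S := by field_simp
    have e2 : (Δ 0 + c * X) / (α * X) = Δ 0 / (α * X) + c / α := by
      field_simp
    rw [← e1, ← e2]; exact h2
  have step2 : Δ 0 / (α * X) ≤ μ * E * Δ 0 := by
    have := mul_le_mul_of_nonneg_right hkey2 hΔ0
    calc Δ 0 / (α * X) = 1 / (α * X) * Δ 0 := by ring
      _ ≤ μ * E * Δ 0 := this
  linarith
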